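/- Let H be the Hoffman–Singleton graph (the unique srg(50,7,0,1)). Then the mutual-visibility number μ(H) ≤ 20. Moreover, if S is a mutual-visibility set of size 20, then H[S] is an induced matching of ten disjoint edges and every vertex outside S has exactly four neighbours in S. -/

import Mathlib

open scoped Classical

def SimpleGraph.MutualVisibilitySet {V : Type*} (G : SimpleGraph V) (S : Set V) : Prop :=
  ∀ u ∈ S, ∀ v ∈ S, ∃ p : G.Walk u v, p.length = G.dist u v ∧
    ∀ w ∈ p.support, w ∈ S → w = u ∨ w = v

noncomputable def edgesWithin {V : Type*} (G : SimpleGraph V) (S : Set V) : ℕ :=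
  {e ∈ G.edgeSet | ∀ v ∈ e, v ∈ S}.ncard

/-! ### Auxiliary lemmas -/

lemma MV.tf3 {V : Type*} {G : SimpleGraph V} (htf : G.CliqueFree 3) {a b c : V}
    (hab : G.Adj a b) (hbc : G.Adj b c) : ¬ G.Adj a c := fun hac =>
  htf {a, b, c} (SimpleGraph.is3Clique_triple_iff.2 ⟨hab, hac, hbc⟩)

/-- In a graph of diameter considerations where non-adjacent pairs have a common neighbour,
the common neighbour of two non-adjacent members of a mutual-visibility set is outside the set. -/
lemma MV.key {V : Type*} {G : SimpleGraph V}
    (huniq : ∀ u v : V, u ≠ v → ¬ G.Adj u v → ∃! w, G.Adj u w ∧ G.Adj w v)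
    {S : Finset V} (hS : G.MutualVisibilitySet ↑S) {u v w : V}
    (hu : u ∈ S) (hv : v ∈ S) (hne : u ≠ v) (hnadj : ¬ G.Adj u v)
    (h1 : G.Adj u w) (h2 : G.Adj w v) : w ∉ S := by
  obtain ⟨p, hlen, hsupp⟩ := hS u (by simpa using hu) v (by simpa using hv)
  have hd2 : G.dist u v = 2 := by
    have hle : G.dist u v ≤ 2 := by
      simpa using SimpleGraph.dist_le
        (SimpleGraph.Walk.cons h1 (SimpleGraph.Walk.cons h2 SimpleGraph.Walk.nil))
    have hpos : 0 < G.dist u v :=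
      SimpleGraph.Reachable.pos_dist_of_ne
        ⟨SimpleGraph.Walk.cons h1 (SimpleGraph.Walk.cons h2 SimpleGraph.Walk.nil)⟩ hne
    have h1' : G.dist u v ≠ 1 := fun h => hnadj (SimpleGraph.dist_eq_one_iff_adj.1 h)
    omega
  rw [hd2] at hlen
  cases p with
  | nil => simp at hlen
  | @cons _ b _ h q =>
    cases q with
    | nil => simp at hlen
    | @cons _ c _ h' q' =>
      have hq0 : q'.length = 0 := by simp only [SimpleGraph.Walk.length_cons] at hlen; omega
      have hcv : c = v := SimpleGraph.Walk.eq_of_length_eq_zero hq0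
      have h'' : G.Adj b v := hcv ▸ h'
      obtain ⟨x, -, hxuniq⟩ := huniq u v hne hnadj
      have hbw : b = w := by
        rw [hxuniq b ⟨h, h''⟩, hxuniq w ⟨h1, h2⟩]
      intro hwS
      have hbS : b ∈ (↑S : Set V) := by rw [hbw]; simpa using hwS
      rcases hsupp b (by simp) hbS with rfl | rfl
      · exact (G.ne_of_adj h) rfl
      · exact (G.ne_of_adj h'') rfl

lemma MV.identA {V : Type*} [Fintype V] (G : SimpleGraph V) [DecidableRel G.Adj]
    (hreg : G.IsRegularOfDegree 7) (S : Finset V) :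
    ∑ t ∈ Sᶜ, (S.filter (fun x => G.Adj t x)).card
      + ∑ u ∈ S, (S.filter (fun x => G.Adj u x)).card = 7 * S.card := by
  have hdeg : ∀ u : V, (Finset.univ.filter (fun t => G.Adj t u)).card = 7 := by
    intro u
    have : Finset.univ.filter (fun t => G.Adj t u) = G.neighborFinset u := by
      ext t; simp [SimpleGraph.adj_comm]
    rw [this]; exact hreg u
  calc ∑ t ∈ Sᶜ, (S.filter (fun x => G.Adj t x)).card
        + ∑ t ∈ S, (S.filter (fun x => G.Adj t x)).card
      = ∑ t : V, (S.filter (fun x => G.Adj t x)).card := by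
        rw [add_comm, Finset.sum_add_sum_compl]
    _ = ∑ t : V, ∑ u ∈ S, (if G.Adj t u then 1 else 0) := by
        simp only [Finset.card_filter]
    _ = ∑ u ∈ S, ∑ t : V, (if G.Adj t u then 1 else 0) := Finset.sum_comm
    _ = ∑ u ∈ S, 7 := by
        refine Finset.sum_congr rfl fun u _ => ?_
        rw [← Finset.card_filter]; exact hdeg u
    _ = 7 * S.card := by rw [Finset.sum_const, smul_eq_mul, mul_comm]

lemma MV.identB {V : Type*} [Fintype V] {G : SimpleGraph V} [DecidableRel G.Adj]
    (htf : G.CliqueFree 3)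
    (huniq : ∀ u v : V, u ≠ v → ¬ G.Adj u v → ∃! w, G.Adj u w ∧ G.Adj w v)
    (S : Finset V) (hS : G.MutualVisibilitySet ↑S) :
    ∑ t ∈ Sᶜ, ((S.filter (fun x => G.Adj t x)).card) ^ 2
      + ∑ u ∈ S, (S.filter (fun x => G.Adj u x)).card + S.card
    = ∑ t ∈ Sᶜ, (S.filter (fun x => G.Adj t x)).card + S.card * S.card := by
  set f : V → ℕ := fun t => (S.filter (fun x => G.Adj t x)).card with hf
  have hi : ∀ t : V,
      (∑ u ∈ S, ∑ v ∈ S, if (u ≠ v ∧ G.Adj t u ∧ G.Adj t v) then 1 else 0) + f t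
        = f t ^ 2 := by
    intro t
    have hft : f t = ∑ u ∈ S, (if G.Adj t u then 1 else 0) := by
      rw [hf]; simp only [Finset.card_filter]
    have hsq : f t ^ 2 = ∑ u ∈ S, ∑ v ∈ S,
        ((if G.Adj t u then (1:ℕ) else 0) * (if G.Adj t v then 1 else 0)) := by
      rw [sq, hft, Finset.sum_mul_sum]
    have hpt : ∀ u v : V,
        (if G.Adj t u then (1:ℕ) else 0) * (if G.Adj t v then 1 else 0)
          = (if (u ≠ v ∧ G.Adj t u ∧ G.Adj t v) then 1 else 0)
            + (if (u = v ∧ G.Adj t u) then 1 else 0) := by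
      intro u v
      by_cases h1 : u = v
      · subst h1; by_cases h2 : G.Adj t u <;> simp [h2]
      · by_cases h2 : G.Adj t u <;> by_cases h3 : G.Adj t v <;> simp [h1, h2, h3]
    have hdiag : ∑ u ∈ S, ∑ v ∈ S, (if (u = v ∧ G.Adj t u) then (1:ℕ) else 0) = f t := by
      rw [hft]
      refine Finset.sum_congr rfl fun u hu => ?_
      simp only [ite_and]
      rw [Finset.sum_ite_eq S u (fun _ => if G.Adj t u then (1:ℕ) else 0), if_pos hu]
    rw [hsq]
    simp only [hpt, Finset.sum_add_distrib]
    rw [hdiag]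
  have hii : ∑ t ∈ Sᶜ, ∑ u ∈ S, ∑ v ∈ S,
        (if (u ≠ v ∧ G.Adj t u ∧ G.Adj t v) then (1:ℕ) else 0)
      = ∑ u ∈ S, ∑ v ∈ S, (if (u ≠ v ∧ ¬ G.Adj u v) then 1 else 0) := by
    rw [Finset.sum_comm]
    refine Finset.sum_congr rfl fun u hu => ?_
    rw [Finset.sum_comm]
    refine Finset.sum_congr rfl fun v hv => ?_
    by_cases hcase : u ≠ v ∧ ¬ G.Adj u v
    · obtain ⟨x, hx, hxu⟩ := huniq u v hcase.1 hcase.2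
      have hxS : x ∉ S := MV.key huniq hS (by simpa using hu) (by simpa using hv)
        hcase.1 hcase.2 hx.1 hx.2
      rw [if_pos hcase]
      have hterm : ∀ t ∈ Sᶜ, (if (u ≠ v ∧ G.Adj t u ∧ G.Adj t v) then (1:ℕ) else 0)
          = if t = x then 1 else 0 := by
        intro t _
        by_cases htx : t = x
        · subst htx; rw [if_pos ⟨hcase.1, hx.1.symm, hx.2⟩, if_pos rfl]
        · rw [if_neg htx, if_neg]
          rintro ⟨-, h1, h2⟩
          exact htx (hxu t ⟨h1.symm, h2⟩)
      rw [Finset.sum_congr rfl hterm, Finset.sum_ite_eq' Sᶜ x (fun _ => (1:ℕ)),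
        if_pos (Finset.mem_compl.2 hxS)]
    · rw [if_neg hcase]
      refine Finset.sum_eq_zero fun t _ => ?_
      rw [if_neg]
      rintro ⟨hne', h1, h2⟩
      rcases not_and_or.1 hcase with h | h
      · exact h hne'
      · rw [not_not] at h
        exact MV.tf3 htf h1.symm h2 h
  have hE : ∑ u ∈ S, f u = ∑ u ∈ S, ∑ v ∈ S, (if G.Adj u v then (1:ℕ) else 0) := by
    rw [hf]; simp only [Finset.card_filter]
  have hiii : (∑ u ∈ S, ∑ v ∈ S, if (u ≠ v ∧ ¬ G.Adj u v) then (1:ℕ) else 0)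
      + ∑ u ∈ S, f u + S.card = S.card * S.card := by
    rw [hE]
    have hdiagS : ∑ u ∈ S, ∑ v ∈ S, (if u = v then (1:ℕ) else 0) = S.card := by
      have h1 : ∀ u ∈ S, ∑ v ∈ S, (if u = v then (1:ℕ) else 0) = 1 := by
        intro u hu
        rw [Finset.sum_ite_eq S u (fun _ => (1:ℕ)), if_pos hu]
      rw [Finset.sum_congr rfl h1, Finset.sum_const, smul_eq_mul, mul_one]
    have hpt : ∀ u v : V, (if (u ≠ v ∧ ¬ G.Adj u v) then (1:ℕ) else 0)
        + (if G.Adj u v then 1 else 0) + (if u = v then 1 else 0) = 1 := by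
      intro u v
      by_cases h1 : u = v
      · subst h1; simp
      · by_cases h2 : G.Adj u v <;> simp [h1, h2]
    calc (∑ u ∈ S, ∑ v ∈ S, if (u ≠ v ∧ ¬ G.Adj u v) then (1:ℕ) else 0)
          + ∑ u ∈ S, ∑ v ∈ S, (if G.Adj u v then (1:ℕ) else 0) + S.card
        = ∑ u ∈ S, ∑ v ∈ S, ((if (u ≠ v ∧ ¬ G.Adj u v) then (1:ℕ) else 0)
            + (if G.Adj u v then 1 else 0) + (if u = v then 1 else 0)) := by
          simp only [Finset.sum_add_distrib]; rw [hdiagS]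
      _ = ∑ u ∈ S, ∑ v ∈ S, (1:ℕ) := by
          refine Finset.sum_congr rfl fun u _ => Finset.sum_congr rfl fun v _ => hpt u v
      _ = S.card * S.card := by simp [mul_comm]
  have hsumsq : ∑ t ∈ Sᶜ, f t ^ 2
      = ∑ u ∈ S, ∑ v ∈ S, (if (u ≠ v ∧ ¬ G.Adj u v) then (1:ℕ) else 0)
        + ∑ t ∈ Sᶜ, f t := by
    calc ∑ t ∈ Sᶜ, f t ^ 2
        = ∑ t ∈ Sᶜ, ((∑ u ∈ S, ∑ v ∈ S,
            if (u ≠ v ∧ G.Adj t u ∧ G.Adj t v) then (1:ℕ) else 0) + f t) := by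
          refine Finset.sum_congr rfl fun t _ => (hi t).symm
      _ = _ := by rw [Finset.sum_add_distrib, hii]
  simp only [hf] at hsumsq hiii ⊢
  omega

/-- The subgraph induced on a finite vertex set, as a `SimpleGraph` on the same vertex type. -/
def MV.subG {V : Type*} (G : SimpleGraph V) (S : Finset V) : SimpleGraph V where
  Adj a b := a ∈ S ∧ b ∈ S ∧ G.Adj a b
  symm := ⟨fun a b h => ⟨h.2.1, h.1, h.2.2.symm⟩⟩
  loopless := ⟨fun a h => G.loopless.irrefl a h.2.2⟩

theorem stmt18 {V : Type*} [Fintype V] (G : SimpleGraph V) [DecidableRel G.Adj]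
    (hcard : Fintype.card V = 50) (hreg : G.IsRegularOfDegree 7)
    (htf : G.CliqueFree 3)
    (huniq : ∀ u v : V, u ≠ v → ¬ G.Adj u v → ∃! w, G.Adj u w ∧ G.Adj w v) :
    (∀ S : Finset V, G.MutualVisibilitySet ↑S → S.card ≤ 20) ∧
      ∀ S : Finset V, G.MutualVisibilitySet ↑S → S.card = 20 →
        edgesWithin G ↑S = 10 ∧
        (∀ v ∈ S, {u ∈ (S : Set V) | G.Adj v u}.ncard = 1) ∧
        ∀ t : V, t ∉ S → {u ∈ (S : Set V) | G.Adj t u}.ncard = 4 := by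
  -- degrees within a mutual-visibility set are at most 1
  have deg1 : ∀ (S : Finset V), G.MutualVisibilitySet ↑S →
      ∀ u ∈ S, (S.filter (fun x => G.Adj u x)).card ≤ 1 := by
    intro S hS u hu
    by_contra hgt
    rw [not_le] at hgt
    obtain ⟨a, ha, b, hb, hab⟩ := Finset.one_lt_card.1 hgt
    rw [Finset.mem_filter] at ha hb
    have hnadj : ¬ G.Adj a b := MV.tf3 htf ha.2.symm hb.2
    exact MV.key huniq hS ha.1 hb.1 hab hnadj ha.2.symm hb.2 hu
  have Ebound : ∀ (S : Finset V), G.MutualVisibilitySet ↑S →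
      ∑ u ∈ S, (S.filter (fun x => G.Adj u x)).card ≤ S.card := by
    intro S hS
    calc ∑ u ∈ S, (S.filter (fun x => G.Adj u x)).card ≤ ∑ u ∈ S, 1 :=
          Finset.sum_le_sum (deg1 S hS)
      _ = S.card := by simp
  have hsub : ∀ (S T : Finset V), T ⊆ S → G.MutualVisibilitySet ↑S →
      G.MutualVisibilitySet ↑T := by
    intro S T hTS hS u hu v hv
    obtain ⟨p, h1, h2⟩ := hS u (hTS hu) v (hTS hv)
    exact ⟨p, h1, fun w hw hwT => h2 w hw (hTS hwT)⟩
  constructor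
  · -- Part 1: the bound
    intro S hS
    by_contra hgt
    rw [not_le] at hgt
    obtain ⟨T, hTS, hT21⟩ := Finset.exists_subset_card_eq (s := S) (n := 21) hgt
    have hT : G.MutualVisibilitySet ↑T := hsub S T hTS hS
    have hA := MV.identA G hreg T
    have hB := MV.identB htf huniq T hT
    have hE := Ebound T hT
    have hCS : (∑ t ∈ Tᶜ, (T.filter (fun x => G.Adj t x)).card) ^ 2
        ≤ Tᶜ.card * ∑ t ∈ Tᶜ, ((T.filter (fun x => G.Adj t x)).card) ^ 2 :=
      sq_sum_le_card_mul_sum_sq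
    have hc : Tᶜ.card = 29 := by rw [Finset.card_compl, hT21, hcard]
    obtain ⟨F1, hF1⟩ : ∃ n, (∑ t ∈ Tᶜ, (T.filter (fun x => G.Adj t x)).card) = n := ⟨_, rfl⟩
    obtain ⟨F2, hF2⟩ : ∃ n, (∑ t ∈ Tᶜ, ((T.filter (fun x => G.Adj t x)).card) ^ 2) = n :=
      ⟨_, rfl⟩
    obtain ⟨E, hEE⟩ : ∃ n, (∑ u ∈ T, (T.filter (fun x => G.Adj u x)).card) = n := ⟨_, rfl⟩
    rw [hF1, hEE, hT21] at hA
    rw [hF1, hF2, hEE, hT21] at hB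
    rw [hEE, hT21] at hE
    rw [hF1, hF2, hc] at hCS
    have h126 : 126 ≤ F1 := by omega
    have hnl : 126 * F1 ≤ F1 ^ 2 := by
      rw [sq]; exact Nat.mul_le_mul_right F1 h126
    obtain ⟨P, hP⟩ : ∃ p, F1 ^ 2 = p := ⟨_, rfl⟩
    rw [hP] at hnl hCS
    omega
  · -- Part 2: structure at size 20
    intro S hS h20
    have hA := MV.identA G hreg S
    have hB := MV.identB htf huniq S hS
    have hE := Ebound S hS
    have hc : Sᶜ.card = 30 := by rw [Finset.card_compl, h20, hcard]
    -- abbreviations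
    obtain ⟨F1, hF1⟩ : ∃ n, (∑ t ∈ Sᶜ, (S.filter (fun x => G.Adj t x)).card) = n := ⟨_, rfl⟩
    obtain ⟨F2, hF2⟩ : ∃ n, (∑ t ∈ Sᶜ, ((S.filter (fun x => G.Adj t x)).card) ^ 2) = n :=
      ⟨_, rfl⟩
    obtain ⟨E, hEE⟩ : ∃ n, (∑ u ∈ S, (S.filter (fun x => G.Adj u x)).card) = n := ⟨_, rfl⟩
    rw [hF1, hEE, h20] at hA
    rw [hF1, hF2, hEE, h20] at hB
    rw [hEE, h20] at hE
    -- the sum of (f t - 4)^2 over the complement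
    have hQ : ∑ t ∈ Sᶜ, (((S.filter (fun x => G.Adj t x)).card : ℤ) - 4) ^ 2
        = (F2 : ℤ) - 8 * F1 + 16 * 30 := by
      have hexp : ∀ t ∈ Sᶜ, (((S.filter (fun x => G.Adj t x)).card : ℤ) - 4) ^ 2
          = (((S.filter (fun x => G.Adj t x)).card : ℤ)) ^ 2
            - 8 * ((S.filter (fun x => G.Adj t x)).card : ℤ) + 16 := by
        intro t _; ring
      rw [Finset.sum_congr rfl hexp]
      rw [Finset.sum_add_distrib, Finset.sum_sub_distrib, Finset.sum_const, hc]
      have e1 : ∑ t ∈ Sᶜ, (((S.filter (fun x => G.Adj t x)).card : ℤ)) ^ 2 = (F2 : ℤ) := by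
        rw [← hF2]; push_cast; ring
      have e2 : ∑ t ∈ Sᶜ, ((S.filter (fun x => G.Adj t x)).card : ℤ) = (F1 : ℤ) := by
        rw [← hF1]; push_cast; ring
      rw [e1, ← Finset.mul_sum, e2]
      push_cast; ring
    have hQ0 : (0:ℤ) ≤ (F2 : ℤ) - 8 * F1 + 16 * 30 := by
      rw [← hQ]
      exact Finset.sum_nonneg fun t _ => sq_nonneg _
    have hE20 : E = 20 := by omega
    have hQz : ∑ t ∈ Sᶜ, (((S.filter (fun x => G.Adj t x)).card : ℤ) - 4) ^ 2 = 0 := by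
      rw [hQ]; omega
    have hf4 : ∀ t ∈ Sᶜ, (S.filter (fun x => G.Adj t x)).card = 4 := by
      intro t ht
      have := (Finset.sum_eq_zero_iff_of_nonneg
        (fun t _ => sq_nonneg (((S.filter (fun x => G.Adj t x)).card : ℤ) - 4))).1 hQz t ht
      have h4 : ((S.filter (fun x => G.Adj t x)).card : ℤ) = 4 := by
        have := sq_eq_zero_iff.1 this
        linarith
      exact_mod_cast h4
    have hf1 : ∀ u ∈ S, (S.filter (fun x => G.Adj u x)).card = 1 := by
      intro u hu
      by_contra hne
      have h0 : (S.filter (fun x => G.Adj u x)).card = 0 := by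
        have := deg1 S hS u hu; omega
      have hsplit : (S.filter (fun x => G.Adj u x)).card
          + ∑ x ∈ S.erase u, (S.filter (fun y => G.Adj x y)).card
          = ∑ x ∈ S, (S.filter (fun y => G.Adj x y)).card :=
        Finset.add_sum_erase S (fun x => (S.filter (fun y => G.Adj x y)).card) hu
      have hb : ∑ x ∈ S.erase u, (S.filter (fun y => G.Adj x y)).card
          ≤ (S.erase u).card • 1 :=
        Finset.sum_le_card_nsmul _ _ 1 fun x hx => deg1 S hS x (Finset.mem_of_mem_erase hx)
      rw [Finset.card_erase_of_mem hu, h20] at hb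
      simp only [smul_eq_mul, mul_one] at hb
      rw [hEE, hE20] at hsplit
      omega
    refine ⟨?_, ?_, ?_⟩
    · -- edgesWithin = 10
      classical
      have hhs := SimpleGraph.sum_degrees_eq_twice_card_edges (MV.subG G S)
      have hdeg' : ∀ v : V, (MV.subG G S).degree v
          = if v ∈ S then (S.filter (fun x => G.Adj v x)).card else 0 := by
        intro v
        rw [SimpleGraph.degree, SimpleGraph.neighborFinset_eq_filter]
        by_cases hv : v ∈ S
        · rw [if_pos hv]
          congr 1
          ext u
          simp [MV.subG, hv]
        · rw [if_neg hv]
          rw [Finset.card_eq_zero]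
          ext u
          simp [MV.subG, hv]
      have hsum : ∑ v : V, (MV.subG G S).degree v = 20 := by
        calc ∑ v : V, (MV.subG G S).degree v
            = ∑ v : V, (if v ∈ S then (S.filter (fun x => G.Adj v x)).card else 0) := by
              exact Finset.sum_congr rfl fun v _ => hdeg' v
          _ = ∑ v ∈ S, (S.filter (fun x => G.Adj v x)).card := by
              rw [Finset.sum_ite_mem, Finset.univ_inter]
          _ = 20 := by rw [hEE, hE20]
      rw [hsum] at hhs
      have hedges : (MV.subG G S).edgeFinset.card = 10 := by omega
      have hset : {e ∈ G.edgeSet | ∀ v ∈ e, v ∈ (↑S : Set V)}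
          = ↑(MV.subG G S).edgeFinset := by
        rw [SimpleGraph.coe_edgeFinset]
        ext e
        induction e using Sym2.ind with
        | _ a b =>
          simp only [Set.mem_setOf_eq, SimpleGraph.mem_edgeSet, Finset.coe_sort_coe,
            SimpleGraph.coe_edgeFinset, Sym2.mem_iff, MV.subG, Finset.mem_coe,
            SimpleGraph.mem_edgeFinset]
          constructor
          · rintro ⟨hadj, hmem⟩
            exact ⟨hmem a (Or.inl rfl), hmem b (Or.inr rfl), hadj⟩
          · rintro ⟨ha, hb, hadj⟩
            refine ⟨hadj, fun v hv => ?_⟩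
            rcases hv with rfl | rfl
            · exact ha
            · exact hb
      rw [edgesWithin, hset, Set.ncard_coe_finset, hedges]
    · intro v hv
      have : {u ∈ (S : Set V) | G.Adj v u} = ↑(S.filter (fun u => G.Adj v u)) := by
        ext u; simp
      rw [this, Set.ncard_coe_finset]
      exact hf1 v hv
    · intro t ht
      have : {u ∈ (S : Set V) | G.Adj t u} = ↑(S.filter (fun u => G.Adj t u)) := by
        ext u; simp
      rw [this, Set.ncard_coe_finset]
      exact hf4 t (Finset.mem_compl.2 ht)
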